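/- arXiv:1709.02431 — 2 statements merged into one kernel-verified Lean document; each statement's English description precedes it below -/
import Mathlib

section
/- Let Ω₀ and Ω₁ be open domains in ℝ^d, d ≥ 2, and let f : Ω₀ → Ω₁ be a bi-Lipschitz homeomorphism with bi-Lipschitz constant κ, i.e. max([f]_{Lip}, [f⁻¹]_{Lip}) ≤ κ. Then there exist constants K₀, K₁ > 0, depending only on d and κ, with the following property: for every rigid solid cylinder C₀ whose closure is contained in Ω₀ and which satisfies rad(C₀) < K₀ · len(C₀), there exists a rigid solid cylinder C₁ in ℝ^d such that f maps C₀ across C₁ and rad(C₁) ≤ K₁ · len(C₁). -/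
/-- The axial (last) coordinate of a point of `ℝ^d`. -/
noncomputable def axC {d : ℕ} (x : EuclideanSpace ℝ (Fin d)) : ℝ :=
  if h : 0 < d then x ⟨d - 1, Nat.sub_lt h Nat.one_pos⟩ else 0

/-- The radial component of a point of `ℝ^d`: the point minus its axial part. -/
noncomputable def radC {d : ℕ} (x : EuclideanSpace ℝ (Fin d)) : EuclideanSpace ℝ (Fin d) :=
  if h : 0 < d then
    x - EuclideanSpace.single ⟨d - 1, Nat.sub_lt h Nat.one_pos⟩
      (x ⟨d - 1, Nat.sub_lt h Nat.one_pos⟩)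
  else x

/-- The open standard solid cylinder `B^{d-1} × B^1 ⊆ ℝ^d`. -/
def stdCyl (d : ℕ) : Set (EuclideanSpace ℝ (Fin d)) := {x | ‖radC x‖ < 1 ∧ |axC x| < 1}

/-- The boundary ball `B^{d-1} × {σ}` of the standard solid cylinder. -/
def stdCap (d : ℕ) (σ : ℝ) : Set (EuclideanSpace ℝ (Fin d)) := {x | ‖radC x‖ < 1 ∧ axC x = σ}

/-- `ψ` is a chart for a topological solid cylinder: a homeomorphism of the closed standard
solid cylinder onto a subset of `ℝ^d` (the cylinder itself being `ψ '' stdCyl d`, with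
boundary balls `ψ '' stdCap d (±1)`). -/
def IsCylChart {d : ℕ} (ψ : EuclideanSpace ℝ (Fin d) → EuclideanSpace ℝ (Fin d)) : Prop :=
  ContinuousOn ψ (closure (stdCyl d)) ∧ Set.InjOn ψ (closure (stdCyl d))

/-- The embedding `φ` maps the topological solid cylinder with chart `ψ` across the standard
solid cylinder `B^{d-1} × B^1`: writing `C = ψ '' stdCyl d` and `C^± = ψ '' stdCap d (±1)`,
(1) `φ(C)` meets the standard cylinder; (2) `φ(C)` avoids the lateral boundary
`∂(B^{d-1}×B^1) ∖ (B^{d-1}×∂B^1)`; (3) the closures of `φ(C^±)` avoid the closed standard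
cylinder; (4) for each sign `σ = ±1` the connected component of
`φ(C) ∖ (B^{d-1}×B^1)` whose boundary contains `φ(C^σ)` has closure meeting
`B^{d-1}×{σ}` but not `B^{d-1}×{-σ}`. -/
def MapsAcrossStd {d : ℕ} (φ ψ : EuclideanSpace ℝ (Fin d) → EuclideanSpace ℝ (Fin d)) : Prop :=
  ((φ '' (ψ '' stdCyl d)) ∩ stdCyl d).Nonempty ∧
  (φ '' (ψ '' stdCyl d)) ∩ (frontier (stdCyl d) \ (stdCap d 1 ∪ stdCap d (-1))) = ∅ ∧
  closure (φ '' (ψ '' stdCap d 1)) ∩ closure (stdCyl d) = ∅ ∧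
  closure (φ '' (ψ '' stdCap d (-1))) ∩ closure (stdCyl d) = ∅ ∧
  ∀ σ : ℝ, σ = 1 ∨ σ = -1 →
    ∃ x ∈ (φ '' (ψ '' stdCyl d)) \ stdCyl d,
      φ '' (ψ '' stdCap d σ) ⊆
        frontier (connectedComponentIn ((φ '' (ψ '' stdCyl d)) \ stdCyl d) x) ∧
      (closure (connectedComponentIn ((φ '' (ψ '' stdCyl d)) \ stdCyl d) x) ∩
        stdCap d σ).Nonempty ∧
      closure (connectedComponentIn ((φ '' (ψ '' stdCyl d)) \ stdCyl d) x) ∩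
        stdCap d (-σ) = ∅

/-- The rigid solid cylinder `C(a,b;ρ)` in `ℝ^d`. -/
def rigidCyl {d : ℕ} (a b : EuclideanSpace ℝ (Fin d)) (ρ : ℝ) :
    Set (EuclideanSpace ℝ (Fin d)) :=
  {x | ∃ (s : ℝ) (v : EuclideanSpace ℝ (Fin d)), |s| < 1 ∧ (inner ℝ v (b - a) : ℝ) = 0 ∧
    ‖v‖ < ρ ∧ x = midpoint ℝ a b + (s / 2) • (b - a) + v}

/-- The boundary ball of `C(a,b;ρ)` corresponding to the sign `σ`. -/
def rigidCap {d : ℕ} (a b : EuclideanSpace ℝ (Fin d)) (ρ σ : ℝ) :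
    Set (EuclideanSpace ℝ (Fin d)) :=
  {x | ∃ v : EuclideanSpace ℝ (Fin d), (inner ℝ v (b - a) : ℝ) = 0 ∧ ‖v‖ < ρ ∧
    x = midpoint ℝ a b + (σ / 2) • (b - a) + v}

/-- `ψ` is a defining affine chart for the rigid solid cylinder `C(a,b;ρ)`. -/
def IsRigidChart {d : ℕ} (a b : EuclideanSpace ℝ (Fin d)) (ρ : ℝ)
    (ψ : EuclideanSpace ℝ (Fin d) → EuclideanSpace ℝ (Fin d)) : Prop :=
  (∃ (L : EuclideanSpace ℝ (Fin d) ≃ₗ[ℝ] EuclideanSpace ℝ (Fin d))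
      (c : EuclideanSpace ℝ (Fin d)), ∀ x, ψ x = c + L x) ∧
  ψ '' stdCyl d = rigidCyl a b ρ ∧
  ψ '' stdCap d 1 = rigidCap a b ρ 1 ∧
  ψ '' stdCap d (-1) = rigidCap a b ρ (-1)

/-- The embedding `φ` maps the topological solid cylinder with chart `ψ` across the rigid
solid cylinder `C(a,b;ρ)`: for a defining affine chart `ψ'` of `C(a,b;ρ)`, the composition
`ψ'⁻¹ ∘ φ` maps the cylinder across the standard solid cylinder. -/
def MapsAcrossRigid {d : ℕ} (φ ψ : EuclideanSpace ℝ (Fin d) → EuclideanSpace ℝ (Fin d))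
    (a b : EuclideanSpace ℝ (Fin d)) (ρ : ℝ) : Prop :=
  ∃ ψ' ψ'i : EuclideanSpace ℝ (Fin d) → EuclideanSpace ℝ (Fin d),
    IsRigidChart a b ρ ψ' ∧ Function.LeftInverse ψ'i ψ' ∧ Function.RightInverse ψ'i ψ' ∧
    MapsAcrossStd (ψ'i ∘ φ) ψ

/-- The embedding `φ` maps the rigid solid cylinder `C(a₀,b₀;ρ₀)` across the rigid solid
cylinder `C(a₁,b₁;ρ₁)`. -/
def RigidMapsAcross {d : ℕ} (φ : EuclideanSpace ℝ (Fin d) → EuclideanSpace ℝ (Fin d))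
    (a₀ b₀ : EuclideanSpace ℝ (Fin d)) (ρ₀ : ℝ)
    (a₁ b₁ : EuclideanSpace ℝ (Fin d)) (ρ₁ : ℝ) : Prop :=
  ∃ ψ₀, IsRigidChart a₀ b₀ ρ₀ ψ₀ ∧ MapsAcrossRigid φ ψ₀ a₁ b₁ ρ₁


open scoped RealInnerProductSpace
open Set Function

namespace CylSep

variable {d : ℕ}

/-- The axial unit vector. -/
noncomputable def eAx (d : ℕ) : EuclideanSpace ℝ (Fin d) :=
  if h : 0 < d then EuclideanSpace.single ⟨d - 1, Nat.sub_lt h Nat.one_pos⟩ 1 else 0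

section basic

variable (hd : 0 < d)
include hd

lemma axC_eq_inner (x : EuclideanSpace ℝ (Fin d)) : axC x = ⟪x, eAx d⟫ := by
  rw [axC, eAx, dif_pos hd, dif_pos hd, EuclideanSpace.inner_single_right]
  simp

lemma radC_eq (x : EuclideanSpace ℝ (Fin d)) : radC x = x - axC x • eAx d := by
  rw [radC, axC, eAx, dif_pos hd, dif_pos hd, dif_pos hd]
  congr 1
  ext j
  simp only [PiLp.smul_apply, EuclideanSpace.single_apply, smul_eq_mul]
  split <;> simp

lemma norm_eAx : ‖eAx d‖ = 1 := by
  rw [eAx, dif_pos hd, EuclideanSpace.norm_single]; norm_num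

lemma inner_eAx_self : ⟪eAx d, eAx d⟫ = (1:ℝ) := by
  rw [real_inner_self_eq_norm_sq, norm_eAx hd]; norm_num

lemma axC_add (x y : EuclideanSpace ℝ (Fin d)) : axC (x + y) = axC x + axC y := by
  simp [axC_eq_inner hd, inner_add_left]

lemma axC_smul (c : ℝ) (x : EuclideanSpace ℝ (Fin d)) : axC (c • x) = c * axC x := by
  rw [axC_eq_inner hd, axC_eq_inner hd, real_inner_smul_left]

lemma axC_sub (x y : EuclideanSpace ℝ (Fin d)) : axC (x - y) = axC x - axC y := by
  simp [axC_eq_inner hd, inner_sub_left]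

lemma axC_eAx : axC (eAx d) = 1 := by
  rw [axC_eq_inner hd, inner_eAx_self hd]

lemma radC_add_axC (x : EuclideanSpace ℝ (Fin d)) : radC x + axC x • eAx d = x := by
  rw [radC_eq hd]; abel

lemma axC_radC (x : EuclideanSpace ℝ (Fin d)) : axC (radC x) = 0 := by
  rw [radC_eq hd, axC_sub hd, axC_smul hd, axC_eAx hd]; ring

lemma radC_add (x y : EuclideanSpace ℝ (Fin d)) : radC (x + y) = radC x + radC y := by
  rw [radC_eq hd, radC_eq hd, radC_eq hd, axC_add hd, add_smul]; abel

lemma radC_smul (c : ℝ) (x : EuclideanSpace ℝ (Fin d)) : radC (c • x) = c • radC x := by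
  rw [radC_eq hd, radC_eq hd, axC_smul hd, smul_sub, mul_smul]

lemma radC_eAx : radC (eAx d) = 0 := by
  rw [radC_eq hd, axC_eAx hd, one_smul, sub_self]

lemma radC_radC (x : EuclideanSpace ℝ (Fin d)) : radC (radC x) = radC x := by
  conv_lhs => rw [radC_eq hd (radC x), axC_radC hd]
  simp

lemma inner_radC_eAx (x : EuclideanSpace ℝ (Fin d)) : ⟪radC x, eAx d⟫ = 0 := by
  rw [← axC_eq_inner hd, axC_radC hd]

lemma continuous_axC : Continuous (axC : EuclideanSpace ℝ (Fin d) → ℝ) := by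
  have : (axC : EuclideanSpace ℝ (Fin d) → ℝ) = fun x => ⟪x, eAx d⟫ := funext (axC_eq_inner hd)
  rw [this]
  exact Continuous.inner continuous_id continuous_const

lemma continuous_radC : Continuous (radC : EuclideanSpace ℝ (Fin d) → EuclideanSpace ℝ (Fin d)) := by
  have : (radC : EuclideanSpace ℝ (Fin d) → EuclideanSpace ℝ (Fin d))
      = fun x => x - axC x • eAx d := funext (radC_eq hd)
  rw [this]
  exact continuous_id.sub ((continuous_axC hd).smul continuous_const)

lemma isOpen_stdCyl : IsOpen (stdCyl d) := by
  have h1 : IsOpen {x : EuclideanSpace ℝ (Fin d) | ‖radC x‖ < 1} :=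
    isOpen_lt (continuous_norm.comp (continuous_radC hd)) continuous_const
  have h2 : IsOpen {x : EuclideanSpace ℝ (Fin d) | |axC x| < 1} :=
    isOpen_lt (continuous_abs.comp (continuous_axC hd)) continuous_const
  exact (h1.inter h2)

lemma closure_stdCyl :
    closure (stdCyl d) = {x | ‖radC x‖ ≤ 1 ∧ |axC x| ≤ 1} := by
  apply le_antisymm
  · apply closure_minimal
    · intro x hx; exact ⟨le_of_lt hx.1, le_of_lt hx.2⟩
    · have h1 : IsClosed {x : EuclideanSpace ℝ (Fin d) | ‖radC x‖ ≤ 1} :=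
        isClosed_le (continuous_norm.comp (continuous_radC hd)) continuous_const
      have h2 : IsClosed {x : EuclideanSpace ℝ (Fin d) | |axC x| ≤ 1} :=
        isClosed_le (continuous_abs.comp (continuous_axC hd)) continuous_const
      exact h1.inter h2
  · intro x hx
    have htend : Filter.Tendsto (fun n : ℕ => (1 - 1/(n+1) : ℝ) • x) Filter.atTop (nhds x) := by
      have h1 : Filter.Tendsto (fun n : ℕ => (1 - 1/(n+1) : ℝ)) Filter.atTop (nhds 1) := by
        have := tendsto_one_div_add_atTop_nhds_zero_nat (𝕜 := ℝ)
        have h2 := Filter.Tendsto.const_sub (1:ℝ) this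
        simpa using h2
      simpa using h1.smul_const x
    refine mem_closure_of_tendsto htend (Filter.Eventually.of_forall fun n => ?_)
    have hn : (0:ℝ) < 1/(n+1) := by positivity
    have hn1 : (1/(n+1) : ℝ) ≤ 1 := by
      rw [div_le_one (by positivity)]; norm_num
    constructor
    · rw [radC_smul hd, norm_smul, Real.norm_eq_abs]
      have : |(1 - 1/(n+1) : ℝ)| = 1 - 1/(n+1) := abs_of_nonneg (by linarith)
      rw [this]
      calc (1 - 1/(n+1) : ℝ) * ‖radC x‖ ≤ (1 - 1/(n+1)) * 1 := by
            apply mul_le_mul_of_nonneg_left hx.1 (by linarith)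
        _ < 1 := by linarith
    · rw [axC_smul hd, abs_mul]
      have : |(1 - 1/(n+1) : ℝ)| = 1 - 1/(n+1) := abs_of_nonneg (by linarith)
      rw [this]
      calc (1 - 1/(n+1) : ℝ) * |axC x| ≤ (1 - 1/(n+1)) * 1 := by
            apply mul_le_mul_of_nonneg_left hx.2 (by linarith)
        _ < 1 := by linarith

lemma stdCap_subset_closure {σ : ℝ} (hσ : |σ| ≤ 1) : stdCap d σ ⊆ closure (stdCyl d) := by
  rw [closure_stdCyl hd]
  intro x hx
  exact ⟨le_of_lt hx.1, by rw [hx.2]; exact hσ⟩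

lemma convex_stdCyl : Convex ℝ (stdCyl d) := by
  intro x hx y hy s t hs ht hst
  have key : ∀ r1 r2 : ℝ, 0 ≤ r1 → 0 ≤ r2 → r1 < 1 → r2 < 1 → s * r1 + t * r2 < 1 := by
    intro r1 r2 h1 h2 h3 h4
    rcases eq_or_lt_of_le hs with h | h
    · have : t = 1 := by linarith
      rw [← h, this]; simpa using h4
    · nlinarith
  constructor
  · rw [radC_add hd, radC_smul hd, radC_smul hd]
    calc ‖s • radC x + t • radC y‖ ≤ ‖s • radC x‖ + ‖t • radC y‖ := norm_add_le _ _
      _ = s * ‖radC x‖ + t * ‖radC y‖ := by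
          rw [norm_smul, norm_smul, Real.norm_of_nonneg hs, Real.norm_of_nonneg ht]
      _ < 1 := key _ _ (norm_nonneg _) (norm_nonneg _) hx.1 hy.1
  · rw [axC_add hd, axC_smul hd, axC_smul hd]
    calc |s * axC x + t * axC y| ≤ |s * axC x| + |t * axC y| := abs_add_le _ _
      _ = s * |axC x| + t * |axC y| := by
          rw [abs_mul, abs_mul, abs_of_nonneg hs, abs_of_nonneg ht]
      _ < 1 := key _ _ (abs_nonneg _) (abs_nonneg _) hx.2 hy.2

end basic

theorem exists_rigid_chart (hd : 0 < d) (a b : EuclideanSpace ℝ (Fin d)) (hab : a ≠ b)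
    (ρ : ℝ) (hρ : 0 < ρ) :
    ∃ ψ ψi : EuclideanSpace ℝ (Fin d) → EuclideanSpace ℝ (Fin d),
      IsRigidChart a b ρ ψ ∧ Function.LeftInverse ψi ψ ∧ Function.RightInverse ψi ψ ∧
      Continuous ψ ∧ Continuous ψi ∧
      (∀ y, axC (ψi y) = ⟪y - midpoint ℝ a b, ‖b - a‖⁻¹ • (b - a)⟫ / (‖b - a‖ / 2)) ∧
      (∀ y, ‖radC (ψi y)‖ = ‖(y - midpoint ℝ a b) -
          ⟪y - midpoint ℝ a b, ‖b - a‖⁻¹ • (b - a)⟫ • (‖b - a‖⁻¹ • (b - a))‖ / ρ) ∧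
      (∀ t : ℝ, ψ (t • eAx d) =
        midpoint ℝ a b + (t * (‖b - a‖ / 2)) • (‖b - a‖⁻¹ • (b - a))) := by
  have hba : b - a ≠ 0 := sub_ne_zero.mpr (Ne.symm hab)
  have hn : (0:ℝ) < ‖b - a‖ := norm_pos_iff.mpr hba
  set u : EuclideanSpace ℝ (Fin d) := ‖b - a‖⁻¹ • (b - a) with hu
  have hunorm : ‖u‖ = 1 := by
    rw [hu, norm_smul, Real.norm_eq_abs, abs_inv, abs_of_pos hn, inv_mul_cancel₀ hn.ne']
  set m : EuclideanSpace ℝ (Fin d) := midpoint ℝ a b with hm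
  set ℓ : ℝ := ‖b - a‖ / 2 with hℓdef
  have hℓ : 0 < ℓ := by rw [hℓdef]; positivity
  set e : EuclideanSpace ℝ (Fin d) := eAx d with he
  have henorm : ‖e‖ = 1 := norm_eAx hd
  set O : EuclideanSpace ℝ (Fin d) ≃ₗᵢ[ℝ] EuclideanSpace ℝ (Fin d) :=
    Submodule.reflection (ℝ ∙ (e - u))ᗮ with hO
  have hOe : O e = u := Submodule.reflection_sub (by rw [henorm, hunorm])
  have hOO : ∀ z, O (O z) = z := fun z => Submodule.reflection_reflection _ z
  have hOu : O u = e := by rw [← hOe, hOO]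
  have hOmap : ∀ z w : EuclideanSpace ℝ (Fin d), ⟪O z, O w⟫ = ⟪z, w⟫ :=
    fun z w => O.inner_map_map z w
  have hadj : ∀ z, ⟪O z, e⟫ = ⟪z, u⟫ := by
    intro z; have h := hOmap z u; rw [hOu] at h; exact h
  have hbau : b - a = ‖b - a‖ • u := by
    rw [hu, smul_smul, mul_inv_cancel₀ hn.ne', one_smul]
  have hax : ∀ (w : EuclideanSpace ℝ (Fin d)) (c s : ℝ), axC (c • radC w + s • e) = s := by
    intro w c s
    rw [axC_add hd, axC_smul hd, axC_radC hd, axC_smul hd, he, axC_eAx hd]; ring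
  have hrad : ∀ (w : EuclideanSpace ℝ (Fin d)) (c s : ℝ),
      radC (c • radC w + s • e) = c • radC w := by
    intro w c s
    rw [radC_add hd, radC_smul hd, radC_radC hd, radC_smul hd, he, radC_eAx hd,
      smul_zero, add_zero]
  have hdecomp : ∀ z : EuclideanSpace ℝ (Fin d), radC z + axC z • e = z := by
    intro z; rw [he]; exact radC_add_axC hd z
  set ψ : EuclideanSpace ℝ (Fin d) → EuclideanSpace ℝ (Fin d) :=
    fun x => m + O (ρ • radC x + (ℓ * axC x) • e) with hψ
  set ψi : EuclideanSpace ℝ (Fin d) → EuclideanSpace ℝ (Fin d) :=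
    fun y => ρ⁻¹ • radC (O (y - m)) + (ℓ⁻¹ * axC (O (y - m))) • e with hψi
  have hLI : Function.LeftInverse ψi ψ := by
    intro x
    show ρ⁻¹ • radC (O (ψ x - m)) + (ℓ⁻¹ * axC (O (ψ x - m))) • e = x
    have h1 : ψ x - m = O (ρ • radC x + (ℓ * axC x) • e) := by
      rw [hψ]; exact add_sub_cancel_left m _
    rw [h1, hOO, hrad, hax, smul_smul, inv_mul_cancel₀ hρ.ne', one_smul,
      ← mul_assoc, inv_mul_cancel₀ hℓ.ne', one_mul]
    exact hdecomp x
  have hRI : Function.RightInverse ψi ψ := by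
    intro y
    show m + O (ρ • radC (ψi y) + (ℓ * axC (ψi y)) • e) = y
    have hr : radC (ψi y) = ρ⁻¹ • radC (O (y - m)) := hrad _ _ _
    have ha : axC (ψi y) = ℓ⁻¹ * axC (O (y - m)) := hax _ _ _
    rw [hr, ha, smul_smul, mul_inv_cancel₀ hρ.ne', one_smul, ← mul_assoc,
      mul_inv_cancel₀ hℓ.ne', one_mul, hdecomp (O (y - m)), hOO]
    abel
  have hψcont : Continuous ψ := by
    apply continuous_const.add
    exact O.continuous.comp
      (by have h1 := continuous_radC hd; have h2 := continuous_axC hd; fun_prop)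
  have hψicont : Continuous ψi := by
    have hc : Continuous fun y : EuclideanSpace ℝ (Fin d) => O (y - m) :=
      O.continuous.comp (continuous_id.sub continuous_const)
    exact (by have h1 := continuous_radC hd; have h2 := continuous_axC hd; fun_prop :
      Continuous fun y => ρ⁻¹ • radC (O (y - m)) + (ℓ⁻¹ * axC (O (y - m))) • e)
  have himg : ∀ x, ψ x = m + (axC x * ℓ) • u + ρ • O (radC x) := by
    intro x
    show m + O (ρ • radC x + (ℓ * axC x) • e) = _
    rw [map_add, map_smul, map_smul, hOe, mul_comm ℓ (axC x)]
    abel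
  have hsc : ∀ s : ℝ, (s / 2) • (b - a) = (s * ℓ) • u := by
    intro s; rw [hbau, smul_smul]; congr 1; rw [hℓdef]; ring
  have hperp : ∀ x, (inner ℝ (ρ • O (radC x)) (b - a) : ℝ) = 0 := by
    intro x
    rw [hbau, real_inner_smul_left, real_inner_smul_right,
      show u = O e from hOe.symm, hOmap, he, inner_radC_eAx hd]
    ring
  have hnormv : ∀ x, ‖ρ • O (radC x)‖ = ρ * ‖radC x‖ := by
    intro x; rw [norm_smul, Real.norm_eq_abs, abs_of_pos hρ, O.norm_map]
  -- backward data
  have hback : ∀ (s : ℝ) (v : EuclideanSpace ℝ (Fin d)), (inner ℝ v (b - a) : ℝ) = 0 → ‖v‖ < ρ →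
      ∃ x, radC x = ρ⁻¹ • O v ∧ axC x = s ∧ ‖radC x‖ < 1 ∧
        ψ x = m + (s / 2) • (b - a) + v := by
    intro s v hv hvn
    have hOve : ⟪O v, e⟫ = (0:ℝ) := by
      rw [hadj, hu, real_inner_smul_right, hv, mul_zero]
    have hradOv : radC (O v) = O v := by
      rw [radC_eq hd, axC_eq_inner hd, ← he, hOve, zero_smul, sub_zero]
    refine ⟨ρ⁻¹ • O v + s • e, ?_, ?_, ?_, ?_⟩
    · rw [radC_add hd, radC_smul hd, radC_smul hd, he, radC_eAx hd, smul_zero, add_zero, hradOv]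
    · rw [axC_add hd, axC_smul hd, axC_smul hd, he, axC_eAx hd, mul_one,
        axC_eq_inner hd, ← he, hOve, mul_zero, zero_add]
    · rw [radC_add hd, radC_smul hd, radC_smul hd, he, radC_eAx hd, smul_zero, add_zero, hradOv,
        norm_smul, Real.norm_eq_abs, abs_inv, abs_of_pos hρ, O.norm_map]
      rw [inv_mul_lt_iff₀ hρ, mul_one]
      exact hvn
    · have hradx : radC (ρ⁻¹ • O v + s • e) = ρ⁻¹ • O v := by
        rw [radC_add hd, radC_smul hd, radC_smul hd, he, radC_eAx hd, smul_zero, add_zero, hradOv]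
      have haxx : axC (ρ⁻¹ • O v + s • e) = s := by
        rw [axC_add hd, axC_smul hd, axC_smul hd, he, axC_eAx hd, mul_one,
          axC_eq_inner hd, ← he, hOve, mul_zero, zero_add]
      rw [himg, hradx, haxx, hsc, map_smul, hOO, smul_smul ρ ρ⁻¹ v,
        mul_inv_cancel₀ hρ.ne', one_smul]
  -- image identities
  have hcyl : ψ '' stdCyl d = rigidCyl a b ρ := by
    ext z
    constructor
    · rintro ⟨x, hx, rfl⟩
      refine ⟨axC x, ρ • O (radC x), hx.2, hperp x, ?_, ?_⟩
      · rw [hnormv]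
        calc ρ * ‖radC x‖ < ρ * 1 := by exact (mul_lt_mul_iff_right₀ hρ).mpr hx.1
          _ = ρ := mul_one ρ
      · rw [himg, hsc]
    · rintro ⟨s, v, hs, hv, hvn, rfl⟩
      obtain ⟨x, hx1, hx2, hx3, hx4⟩ := hback s v hv hvn
      exact ⟨x, ⟨hx3, by rw [hx2]; exact hs⟩, hx4⟩
  have hcap : ∀ σ : ℝ, ψ '' stdCap d σ = rigidCap a b ρ σ := by
    intro σ
    ext z
    constructor
    · rintro ⟨x, hx, rfl⟩
      refine ⟨ρ • O (radC x), hperp x, ?_, ?_⟩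
      · rw [hnormv]
        calc ρ * ‖radC x‖ < ρ * 1 := by exact (mul_lt_mul_iff_right₀ hρ).mpr hx.1
          _ = ρ := mul_one ρ
      · rw [himg, hx.2, hsc]
    · rintro ⟨v, hv, hvn, rfl⟩
      obtain ⟨x, hx1, hx2, hx3, hx4⟩ := hback σ v hv hvn
      exact ⟨x, ⟨hx3, hx2⟩, hx4⟩
  -- linear part
  have hSmap_add : ∀ x y : EuclideanSpace ℝ (Fin d),
      (ρ • radC (x+y) + (ℓ * axC (x+y)) • e) =
        (ρ • radC x + (ℓ * axC x) • e) + (ρ • radC y + (ℓ * axC y) • e) := by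
    intro x y
    rw [radC_add hd, axC_add hd, smul_add, mul_add, add_smul]; abel
  have hSmap_smul : ∀ (c : ℝ) (x : EuclideanSpace ℝ (Fin d)),
      (ρ • radC (c • x) + (ℓ * axC (c • x)) • e) =
        c • (ρ • radC x + (ℓ * axC x) • e) := by
    intro c x
    rw [radC_smul hd, axC_smul hd, smul_add, smul_comm ρ c, smul_smul, smul_smul]
    congr 2
    ring
  have hSimap_add : ∀ x y : EuclideanSpace ℝ (Fin d),
      (ρ⁻¹ • radC (x+y) + (ℓ⁻¹ * axC (x+y)) • e) =
        (ρ⁻¹ • radC x + (ℓ⁻¹ * axC x) • e) + (ρ⁻¹ • radC y + (ℓ⁻¹ * axC y) • e) := by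
    intro x y
    rw [radC_add hd, axC_add hd, smul_add, mul_add, add_smul]; abel
  have hSimap_smul : ∀ (c : ℝ) (x : EuclideanSpace ℝ (Fin d)),
      (ρ⁻¹ • radC (c • x) + (ℓ⁻¹ * axC (c • x)) • e) =
        c • (ρ⁻¹ • radC x + (ℓ⁻¹ * axC x) • e) := by
    intro c x
    rw [radC_smul hd, axC_smul hd, smul_add, smul_comm ρ⁻¹ c, smul_smul, smul_smul]
    congr 2
    ring
  let S : EuclideanSpace ℝ (Fin d) →ₗ[ℝ] EuclideanSpace ℝ (Fin d) :=
    { toFun := fun x => ρ • radC x + (ℓ * axC x) • e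
      map_add' := hSmap_add
      map_smul' := hSmap_smul }
  let Si : EuclideanSpace ℝ (Fin d) →ₗ[ℝ] EuclideanSpace ℝ (Fin d) :=
    { toFun := fun x => ρ⁻¹ • radC x + (ℓ⁻¹ * axC x) • e
      map_add' := hSimap_add
      map_smul' := hSimap_smul }
  have hSSi : ∀ y, S (Si y) = y := by
    intro y
    show ρ • radC (ρ⁻¹ • radC y + (ℓ⁻¹ * axC y) • e) +
      (ℓ * axC (ρ⁻¹ • radC y + (ℓ⁻¹ * axC y) • e)) • e = y
    rw [hrad, hax, smul_smul, mul_inv_cancel₀ hρ.ne', one_smul, ← mul_assoc,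
      mul_inv_cancel₀ hℓ.ne', one_mul]
    exact hdecomp y
  have hSiS : ∀ x, Si (S x) = x := by
    intro x
    show ρ⁻¹ • radC (ρ • radC x + (ℓ * axC x) • e) +
      (ℓ⁻¹ * axC (ρ • radC x + (ℓ * axC x) • e)) • e = x
    rw [hrad, hax, smul_smul, inv_mul_cancel₀ hρ.ne', one_smul, ← mul_assoc,
      inv_mul_cancel₀ hℓ.ne', one_mul]
    exact hdecomp x
  let Seq : EuclideanSpace ℝ (Fin d) ≃ₗ[ℝ] EuclideanSpace ℝ (Fin d) :=
    LinearEquiv.ofLinear S Si (LinearMap.ext hSSi) (LinearMap.ext hSiS)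
  refine ⟨ψ, ψi, ⟨⟨Seq.trans O.toLinearEquiv, m, fun x => ?_⟩, hcyl, hcap 1, hcap (-1)⟩,
    hLI, hRI, hψcont, hψicont, ?_, ?_, ?_⟩
  · show m + O (ρ • radC x + (ℓ * axC x) • e) = m + (Seq.trans O.toLinearEquiv) x
    rfl
  · intro y
    have ha : axC (ψi y) = ℓ⁻¹ * axC (O (y - m)) := hax _ _ _
    rw [ha, axC_eq_inner hd, ← he, hadj, inv_mul_eq_div]
  · intro y
    have hr : radC (ψi y) = ρ⁻¹ • radC (O (y - m)) := hrad _ _ _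
    have key : ‖radC (O (y - m))‖ = ‖(y - m) - ⟪y - m, u⟫ • u‖ := by
      rw [← O.norm_map (radC (O (y - m)))]
      congr 1
      rw [radC_eq hd, map_sub, map_smul, hOO, axC_eq_inner hd, ← he, hadj, hOe]
    rw [hr, norm_smul, Real.norm_eq_abs, abs_inv, abs_of_pos hρ, key, inv_mul_eq_div]
  · intro t
    show m + O (ρ • radC (t • e) + (ℓ * axC (t • e)) • e) = m + (t * ℓ) • u
    rw [radC_smul hd, he, radC_eAx hd, smul_zero, smul_zero, zero_add, axC_smul hd,
      axC_eAx hd, mul_one, map_smul, ← he, hOe, mul_comm ℓ t]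

theorem cond4 (hd : 0 < d) (g : EuclideanSpace ℝ (Fin d) → EuclideanSpace ℝ (Fin d))
    (σ : ℝ) (hσ : σ = 1 ∨ σ = -1) (δ : ℝ) (hδ0 : 0 < δ) (hδ1 : δ < 1)
    (hgc : ∀ x ∈ closure (stdCyl d), ContinuousAt g x)
    (hinj : Set.InjOn g (closure (stdCyl d)))
    (hradb : ∀ x ∈ closure (stdCyl d), ‖radC (g x)‖ < 1)
    (hcap : ∀ x ∈ closure (stdCyl d), 1 - δ ≤ σ * axC x → 1 < σ * axC (g x))
    (hopp : ∀ x ∈ closure (stdCyl d), σ * axC x ≤ -(1 - δ) → σ * axC (g x) < -1) :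
    ∃ x ∈ (g '' stdCyl d) \ stdCyl d,
      g '' stdCap d σ ⊆ frontier (connectedComponentIn ((g '' stdCyl d) \ stdCyl d) x) ∧
      (closure (connectedComponentIn ((g '' stdCyl d) \ stdCyl d) x) ∩ stdCap d σ).Nonempty ∧
      closure (connectedComponentIn ((g '' stdCyl d) \ stdCyl d) x) ∩ stdCap d (-σ) = ∅ := by
  have hσ1 : |σ| = 1 := by rcases hσ with h | h <;> simp [h]
  have hσsq : σ * σ = 1 := by rcases hσ with h | h <;> (rw [h]; norm_num)
  have hsub : stdCyl d ⊆ closure (stdCyl d) := subset_closure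
  have haxsm : ∀ t : ℝ, σ * axC ((σ * t) • eAx d) = t := by
    intro t
    rw [axC_smul hd, axC_eAx hd, mul_one]
    calc σ * (σ * t) = (σ * σ) * t := by ring
      _ = t := by rw [hσsq, one_mul]
  have hmem_t : ∀ t : ℝ, |t| < 1 → (σ * t) • eAx d ∈ stdCyl d := by
    intro t ht
    constructor
    · rw [radC_smul hd, radC_eAx hd, smul_zero, norm_zero]; norm_num
    · rw [axC_smul hd, axC_eAx hd, mul_one, abs_mul, hσ1, one_mul]; exact ht
  have hnotinP : ∀ z : EuclideanSpace ℝ (Fin d), 1 < σ * axC z → z ∉ stdCyl d := by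
    intro z h hz
    have h3 : σ * axC z ≤ |axC z| := by
      rw [← one_mul |axC z|, ← hσ1, ← abs_mul]
      exact le_abs_self _
    have := hz.2
    linarith
  set t₂ : ℝ := 1 - δ/2 with ht₂
  set t₁ : ℝ := -(1 - δ/2) with ht₁
  have ht₁₂ : t₁ < t₂ := by rw [ht₁, ht₂]; linarith
  set x₂ : EuclideanSpace ℝ (Fin d) := (σ * t₂) • eAx d with hx₂
  have hx₂mem : x₂ ∈ stdCyl d := hmem_t t₂ (by rw [ht₂, abs_of_pos (by linarith)]; linarith)
  set F : Set (EuclideanSpace ℝ (Fin d)) := (g '' stdCyl d) \ stdCyl d with hF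
  have hx₂ax : σ * axC x₂ = t₂ := haxsm t₂
  have hx₂gax : 1 < σ * axC (g x₂) :=
    hcap x₂ (hsub hx₂mem) (by rw [hx₂ax, ht₂]; linarith)
  have hx0F : g x₂ ∈ F := ⟨mem_image_of_mem g hx₂mem, hnotinP _ hx₂gax⟩
  set Γ : Set (EuclideanSpace ℝ (Fin d)) := connectedComponentIn F (g x₂) with hΓ
  -- the slab N near the σ-cap
  set N : Set (EuclideanSpace ℝ (Fin d)) := stdCyl d ∩ {z | 1 - δ < σ * axC z} with hN
  have hx₂N : x₂ ∈ N := ⟨hx₂mem, by simp only [mem_setOf_eq, hx₂ax, ht₂]; linarith⟩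
  have hNconv : Convex ℝ N := by
    apply (convex_stdCyl hd).inter
    intro p hp q hq s t hs ht hst
    simp only [mem_setOf_eq] at hp hq ⊢
    rw [axC_add hd, axC_smul hd, axC_smul hd]
    rcases eq_or_lt_of_le hs with h | h
    · have h1 : t = 1 := by linarith
      rw [← h, h1]; simpa using hq
    · nlinarith
  have hNsub : N ⊆ stdCyl d := inter_subset_left
  have hgNF : g '' N ⊆ F := by
    rintro z ⟨p, hp, rfl⟩
    exact ⟨mem_image_of_mem g (hNsub hp),
      hnotinP _ (hcap p (hsub (hNsub hp)) (le_of_lt hp.2))⟩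
  have hgNΓ : g '' N ⊆ Γ := by
    apply IsPreconnected.subset_connectedComponentIn
    · exact (hNconv.isPreconnected).image g
        (fun p hp => (hgc p (hsub (hNsub hp))).continuousWithinAt)
    · exact mem_image_of_mem g hx₂N
    · exact hgNF
  -- F splits by sign of σ * axC
  have hFax : ∀ z ∈ F, 1 ≤ |axC z| := by
    rintro z ⟨⟨p, hp, rfl⟩, hz2⟩
    by_contra hcon
    push_neg at hcon
    exact hz2 ⟨hradb p (hsub hp), hcon⟩
  have hΓpos : Γ ⊆ {z | 0 < σ * axC z} := by
    apply IsPreconnected.subset_left_of_subset_union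
      (u := {z : EuclideanSpace ℝ (Fin d) | 0 < σ * axC z})
      (v := {z : EuclideanSpace ℝ (Fin d) | σ * axC z < 0})
      (isOpen_lt continuous_const (continuous_const.mul (continuous_axC hd)))
      (isOpen_lt (continuous_const.mul (continuous_axC hd)) continuous_const)
    · rw [Set.disjoint_left]
      intro z h1 h2
      simp only [mem_setOf_eq] at h1 h2
      linarith
    · intro z hz
      have h1 := hFax z (connectedComponentIn_subset F (g x₂) hz)
      have h2 : 1 ≤ |σ * axC z| := by rw [abs_mul, hσ1, one_mul]; exact h1
      rcases le_abs.mp h2 with h | h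
      · exact Or.inl (by simp only [mem_setOf_eq]; linarith)
      · exact Or.inr (by simp only [mem_setOf_eq]; linarith)
    · exact ⟨g x₂, mem_connectedComponentIn hx0F, by simp only [mem_setOf_eq]; linarith⟩
    · exact isPreconnected_connectedComponentIn
  have hΓ1 : Γ ⊆ {z | 1 ≤ σ * axC z} := by
    intro z hz
    have h1 := hFax z (connectedComponentIn_subset F (g x₂) hz)
    have h2 := hΓpos hz
    simp only [mem_setOf_eq] at h2 ⊢
    have h3 : 1 ≤ |σ * axC z| := by rw [abs_mul, hσ1, one_mul]; exact h1
    rcases le_abs.mp h3 with h | h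
    · exact h
    · linarith
  have hclΓ1 : closure Γ ⊆ {z | 1 ≤ σ * axC z} := by
    apply closure_minimal hΓ1
    exact isClosed_le continuous_const (continuous_const.mul (continuous_axC hd))
  -- part (c)
  have hpartC : closure Γ ∩ stdCap d (-σ) = ∅ := by
    ext z
    simp only [mem_inter_iff, mem_empty_iff_false, iff_false, not_and]
    intro h1 h2
    have h3 := hclΓ1 h1
    simp only [mem_setOf_eq] at h3
    rw [h2.2] at h3
    have : σ * -σ = -1 := by rw [mul_neg, hσsq]
    rw [this] at h3
    linarith
  -- part (a)
  have hpartA : g '' stdCap d σ ⊆ frontier Γ := by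
    rintro q ⟨x, hx, rfl⟩
    have hxcl : x ∈ closure (stdCyl d) := stdCap_subset_closure hd (le_of_eq hσ1) hx
    have hqcl : g x ∈ closure Γ := by
      set p : ℝ → EuclideanSpace ℝ (Fin d) := fun t => radC x + (σ * t) • eAx d with hp
      have hpmem : ∀ t, 1 - δ < t → t < 1 → p t ∈ N := by
        intro t h1 h2
        have h0 : 0 < t := by linarith
        have hrt : radC (p t) = radC x := by
          rw [hp]
          simp only
          rw [radC_add hd, radC_radC hd, radC_smul hd, radC_eAx hd, smul_zero, add_zero]
        have hat : axC (p t) = σ * t := by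
          rw [hp]
          simp only
          rw [axC_add hd, axC_radC hd, axC_smul hd, axC_eAx hd, mul_one, zero_add]
        refine ⟨⟨by rw [hrt]; exact hx.1, ?_⟩, ?_⟩
        · rw [hat, abs_mul, hσ1, one_mul, abs_of_pos h0]; exact h2
        · simp only [mem_setOf_eq]
          rw [hat]
          calc (1 - δ : ℝ) < t := h1
            _ = σ * (σ * t) := by rw [← mul_assoc, hσsq, one_mul]
      have hp1 : p 1 = x := by
        rw [hp]
        simp only
        rw [mul_one, ← hx.2]
        exact radC_add_axC hd x
      have hpc : Continuous p := by
        apply continuous_const.add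
        exact (continuous_const.mul continuous_id).smul continuous_const
      have hne : (nhdsWithin (1:ℝ) (Ioo (1-δ) 1)).NeBot := by
        rw [nhdsWithin_Ioo_eq_nhdsLT (by linarith : (1-δ:ℝ) < 1)]
        infer_instance
      have htd : Filter.Tendsto (fun t => g (p t)) (nhdsWithin (1:ℝ) (Ioo (1-δ) 1))
          (nhds (g x)) := by
        apply Filter.Tendsto.comp (hgc x hxcl).tendsto
        rw [← hp1]
        exact (hpc.tendsto 1).mono_left nhdsWithin_le_nhds
      apply mem_closure_of_tendsto htd
      filter_upwards [eventually_mem_nhdsWithin] with t ht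
      exact hgNΓ (mem_image_of_mem g (hpmem t ht.1 ht.2))
    have hqnot : g x ∉ g '' stdCyl d := by
      rintro ⟨y, hy, hgy⟩
      have := hinj (hsub hy) hxcl hgy
      rw [this] at hy
      have h1 := hy.2
      rw [hx.2] at h1
      rw [hσ1] at h1
      exact lt_irrefl 1 h1
    rw [← closure_diff_interior]
    refine ⟨hqcl, fun hint => hqnot ?_⟩
    have h1 : g x ∈ Γ := interior_subset hint
    exact (connectedComponentIn_subset F (g x₂) h1).1
  -- part (b) : the last crossing of the axis
  have hpartB : (closure Γ ∩ stdCap d σ).Nonempty := by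
    set c : ℝ → EuclideanSpace ℝ (Fin d) := fun t => g ((σ * t) • eAx d) with hc
    set aa : ℝ → ℝ := fun t => σ * axC (c t) with haa
    have hmemI : ∀ t ∈ Icc t₁ t₂, (σ * t) • eAx d ∈ stdCyl d := by
      intro t ht
      apply hmem_t
      rw [abs_lt]
      constructor
      · calc -1 < t₁ := by rw [ht₁]; linarith
          _ ≤ t := ht.1
      · calc t ≤ t₂ := ht.2
          _ < 1 := by rw [ht₂]; linarith
    have hccont : ∀ t ∈ Icc t₁ t₂, ContinuousAt c t := by
      intro t ht
      have h_inner : ContinuousAt (fun s : ℝ => (σ * s) • eAx d) t :=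
        ((continuous_const.mul continuous_id).smul continuous_const).continuousAt
      exact ContinuousAt.comp (g := g) (f := fun s : ℝ => (σ * s) • eAx d)
        (hgc _ (hsub (hmemI t ht))) h_inner
    have haacont : ∀ t ∈ Icc t₁ t₂, ContinuousAt aa t := by
      intro t ht
      exact (continuousAt_const.mul ((continuous_axC hd).continuousAt.comp (hccont t ht)))
    have ha2 : 1 < aa t₂ := by
      apply hcap _ (hsub (hmemI t₂ ⟨le_of_lt ht₁₂, le_refl _⟩))
      rw [haxsm t₂, ht₂]; linarith
    have ha1 : aa t₁ < -1 := by
      apply hopp _ (hsub (hmemI t₁ ⟨le_refl _, le_of_lt ht₁₂⟩))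
      rw [haxsm t₁, ht₁]; linarith
    set T : Set ℝ := {t ∈ Icc t₁ t₂ | aa t ≤ 1} with hT
    have hTne : T.Nonempty := ⟨t₁, ⟨le_refl _, le_of_lt ht₁₂⟩, by linarith⟩
    have hTbdd : BddAbove T := ⟨t₂, fun t ht => ht.1.2⟩
    have hTclosed : IsClosed T := by
      have : T = Icc t₁ t₂ ∩ aa ⁻¹' (Iic 1) := by
        ext t; simp [hT, mem_setOf_eq, and_comm]
      rw [this]
      apply ContinuousOn.preimage_isClosed_of_isClosed _ isClosed_Icc isClosed_Iic
      exact fun t ht => (haacont t ht).continuousWithinAt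
    set ts : ℝ := sSup T with hts
    have htsT : ts ∈ T := hTclosed.csSup_mem hTne hTbdd
    have hts1 : t₁ ≤ ts := htsT.1.1
    have hts2 : ts ≤ t₂ := htsT.1.2
    have htslt : ts < t₂ := lt_of_le_of_ne hts2 (by
      intro h
      rw [h] at htsT
      linarith [htsT.2])
    have hgt : ∀ t, ts < t → t ≤ t₂ → 1 < aa t := by
      intro t h1 h2
      by_contra hcon
      push_neg at hcon
      have : t ∈ T := ⟨⟨le_trans hts1 (le_of_lt h1), h2⟩, hcon⟩
      have := le_csSup hTbdd this
      linarith
    have haats : aa ts = 1 := by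
      rcases lt_or_eq_of_le htsT.2 with hlt | heq
      · exfalso
        have hca : ContinuousAt aa ts := haacont ts ⟨hts1, hts2⟩
        have hev : ∀ᶠ t in nhds ts, aa t < 1 := hca.eventually_lt continuousAt_const hlt
        rw [Metric.eventually_nhds_iff] at hev
        obtain ⟨ε, hε, hball⟩ := hev
        set t' : ℝ := min t₂ (ts + ε/2) with ht'
        have h1 : ts < t' := lt_min htslt (by linarith)
        have h2 : t' ≤ t₂ := min_le_left _ _
        have h3 : dist t' ts < ε := by
          rw [Real.dist_eq, abs_of_pos (by linarith)]
          calc t' - ts ≤ (ts + ε/2) - ts := by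
                have := min_le_right t₂ (ts + ε/2); linarith
            _ < ε := by linarith
        have := hball h3
        have := hgt t' h1 h2
        linarith
      · exact heq
    have harc : c '' (Ioc ts t₂) ⊆ Γ := by
      apply IsPreconnected.subset_connectedComponentIn
      · apply isPreconnected_Ioc.image
        intro t ht
        exact (hccont t ⟨le_trans hts1 (le_of_lt ht.1), ht.2⟩).continuousWithinAt
      · exact ⟨t₂, ⟨htslt, le_refl _⟩, rfl⟩
      · rintro z ⟨t, ht, rfl⟩
        refine ⟨mem_image_of_mem g (hmemI t ⟨le_trans hts1 (le_of_lt ht.1), ht.2⟩), ?_⟩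
        exact hnotinP _ (hgt t ht.1 ht.2)
    have hclts : c ts ∈ closure Γ := by
      have hne : (nhdsWithin ts (Ioc ts t₂)).NeBot := by
        rw [nhdsWithin_Ioc_eq_nhdsGT htslt]
        infer_instance
      have htd : Filter.Tendsto c (nhdsWithin ts (Ioc ts t₂)) (nhds (c ts)) :=
        ((hccont ts ⟨hts1, hts2⟩).tendsto).mono_left nhdsWithin_le_nhds
      apply mem_closure_of_tendsto htd
      filter_upwards [eventually_mem_nhdsWithin] with t ht
      exact harc (mem_image_of_mem c ht)
    refine ⟨c ts, hclts, hradb _ (hsub (hmemI ts ⟨hts1, hts2⟩)), ?_⟩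
    have h5 : σ * axC (c ts) = 1 := haats
    calc axC (c ts) = (σ * σ) * axC (c ts) := by rw [hσsq, one_mul]
      _ = σ * (σ * axC (c ts)) := by ring
      _ = σ * 1 := by rw [h5]
      _ = σ := mul_one σ
  exact ⟨g x₂, hx0F, hpartA, hpartB, hpartC⟩
end CylSep

open CylSep

set_option maxHeartbeats 8000000 in
/-- **Bi-Lipschitz cylinder separation**: let `f : Ω₀ → Ω₁` be a bi-Lipschitz homeomorphism
between open domains of `ℝ^d` (`d ≥ 2`) with bi-Lipschitz constant `κ`.  There are constants
`K₀, K₁ > 0`, depending only on `d` and `κ`, such that every rigid solid cylinder `C₀` with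
closure contained in `Ω₀` and `rad C₀ < K₀ · len C₀` is mapped by `f` across some rigid solid
cylinder `C₁` with `rad C₁ ≤ K₁ · len C₁`. -/
theorem bilipschitz_cylinder_separation (d : ℕ) (hd : 2 ≤ d) (κ : ℝ) (hκ : 0 < κ) :
    ∃ K₀ K₁ : ℝ, 0 < K₀ ∧ 0 < K₁ ∧
      ∀ (Ω₀ Ω₁ : Set (EuclideanSpace ℝ (Fin d))), IsOpen Ω₀ → IsOpen Ω₁ →
      ∀ f : EuclideanSpace ℝ (Fin d) → EuclideanSpace ℝ (Fin d),
        Set.BijOn f Ω₀ Ω₁ →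
        (∀ x ∈ Ω₀, ∀ y ∈ Ω₀, dist (f x) (f y) ≤ κ * dist x y) →
        (∀ x ∈ Ω₀, ∀ y ∈ Ω₀, dist x y ≤ κ * dist (f x) (f y)) →
        ∀ (a₀ b₀ : EuclideanSpace ℝ (Fin d)) (ρ₀ : ℝ), a₀ ≠ b₀ → 0 < ρ₀ →
          closure (rigidCyl a₀ b₀ ρ₀) ⊆ Ω₀ →
          ρ₀ < K₀ * dist a₀ b₀ →
          ∃ (a₁ b₁ : EuclideanSpace ℝ (Fin d)) (ρ₁ : ℝ), a₁ ≠ b₁ ∧ 0 < ρ₁ ∧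
            RigidMapsAcross f a₀ b₀ ρ₀ a₁ b₁ ρ₁ ∧
            ρ₁ ≤ K₁ * dist a₁ b₁ := by
  have hd0 : 0 < d := by omega
  refine ⟨1/(16*κ^2), 8*κ^2, by positivity, by positivity, ?_⟩
  intro Ω₀ Ω₁ hΩ₀ hΩ₁ f hbij hlip hlipinv a₀ b₀ ρ₀ hab₀ hρ₀ hclsub hρ₀K
  set L : ℝ := dist a₀ b₀ with hLdef
  have hL : 0 < L := dist_pos.mpr hab₀
  have hnb : ‖b₀ - a₀‖ = L := by rw [hLdef, dist_eq_norm, norm_sub_rev]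
  have hnb0 : ‖b₀ - a₀‖ ≠ 0 := by rw [hnb]; exact hL.ne'
  -- chart for the source cylinder
  obtain ⟨ψ₀, ψ₀i, hchart₀, hLI₀, hRI₀, hcont₀, hconti₀, hax₀, hrad₀, haxis₀⟩ :=
    exists_rigid_chart hd0 a₀ b₀ hab₀ ρ₀ hρ₀
  have hψΩ : ∀ x ∈ closure (stdCyl d), ψ₀ x ∈ Ω₀ := by
    intro x hx
    apply hclsub
    rw [← hchart₀.2.1]
    exact image_closure_subset_closure_image hcont₀ (mem_image_of_mem ψ₀ hx)
  have hu₀norm : ‖(‖b₀ - a₀‖⁻¹ • (b₀ - a₀) : EuclideanSpace ℝ (Fin d))‖ = 1 := by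
    rw [norm_smul, Real.norm_eq_abs, abs_inv, abs_of_pos (by rw [hnb]; exact hL),
      inv_mul_cancel₀ hnb0]
  have hteAx_cl : ∀ t : ℝ, |t| ≤ 1 → t • eAx d ∈ closure (stdCyl d) := by
    intro t ht
    rw [closure_stdCyl hd0]
    constructor
    · rw [radC_smul hd0, radC_eAx hd0, smul_zero, norm_zero]; norm_num
    · rw [axC_smul hd0, axC_eAx hd0, mul_one]; exact ht
  have hmid0 : ∀ p q : EuclideanSpace ℝ (Fin d), midpoint ℝ p q = (2⁻¹:ℝ) • (p + q) :=
    fun p q => by rw [midpoint_eq_smul_add, invOf_eq_inv]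
  have hψb : ψ₀ ((1:ℝ) • eAx d) = b₀ := by
    rw [haxis₀ 1, hmid0, smul_smul]
    have h1 : 1 * (‖b₀ - a₀‖ / 2) * ‖b₀ - a₀‖⁻¹ = 2⁻¹ := by
      field_simp
    rw [h1]
    module
  have hψa : ψ₀ ((-1:ℝ) • eAx d) = a₀ := by
    rw [haxis₀ (-1), hmid0, smul_smul]
    have h1 : -1 * (‖b₀ - a₀‖ / 2) * ‖b₀ - a₀‖⁻¹ = -2⁻¹ := by
      field_simp
    rw [h1]
    module
  have ha₀Ω : a₀ ∈ Ω₀ := by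
    rw [← hψa]; exact hψΩ _ (hteAx_cl (-1) (by norm_num))
  have hb₀Ω : b₀ ∈ Ω₀ := by
    rw [← hψb]; exact hψΩ _ (hteAx_cl 1 (by norm_num))
  -- bi-Lipschitz data
  set A : EuclideanSpace ℝ (Fin d) := f a₀ with hA
  set B : EuclideanSpace ℝ (Fin d) := f b₀ with hB
  set D : ℝ := dist A B with hD
  have hDL : L ≤ κ * D := hlipinv a₀ ha₀Ω b₀ hb₀Ω
  have hDU : D ≤ κ * L := hlip a₀ ha₀Ω b₀ hb₀Ω
  have hDpos : 0 < D := by nlinarith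
  have hκ1 : 1 ≤ κ := by nlinarith
  have hκsq : 1 ≤ κ^2 := by nlinarith
  have h16 : ρ₀ * (16*κ^2) < L := by
    have h := hρ₀K
    rw [one_div, inv_mul_eq_div, lt_div_iff₀ (by positivity)] at h
    exact h
  have hρ₀L : ρ₀ < L := by nlinarith
  set δ : ℝ := 1/(8*κ^2) with hδdef
  have hδ0 : 0 < δ := by positivity
  have hδ1 : δ < 1 := by rw [hδdef]; rw [div_lt_one (by positivity)]; nlinarith
  -- the target cylinder
  have hBA : ‖B - A‖ = D := by rw [hD, dist_eq_norm, norm_sub_rev]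
  have hBA0 : B - A ≠ 0 := by
    intro h
    rw [h, norm_zero] at hBA
    exact hDpos.ne hBA
  set u : EuclideanSpace ℝ (Fin d) := ‖B - A‖⁻¹ • (B - A) with hu
  have hun : ‖u‖ = 1 := by
    rw [hu, norm_smul, Real.norm_eq_abs, abs_inv, abs_of_pos (hBA ▸ hDpos),
      inv_mul_cancel₀ (by rw [hBA]; exact hDpos.ne')]
  have hBAu : B - A = D • u := by
    rw [hu, smul_smul, hBA, mul_inv_cancel₀ hDpos.ne', one_smul]
  set M : EuclideanSpace ℝ (Fin d) := midpoint ℝ A B with hM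
  set a₁ : EuclideanSpace ℝ (Fin d) := M - (D/4) • u with ha₁
  set b₁ : EuclideanSpace ℝ (Fin d) := M + (D/4) • u with hb₁
  have hb₁a₁ : b₁ - a₁ = (D/2) • u := by rw [ha₁, hb₁]; module
  have hn₁ : ‖b₁ - a₁‖ = D/2 := by
    rw [hb₁a₁, norm_smul, Real.norm_eq_abs, abs_of_pos (by positivity), hun, mul_one]
  have hab₁ : a₁ ≠ b₁ := by
    intro h
    have h0 : b₁ - a₁ = 0 := by rw [h, sub_self]
    rw [h0, norm_zero] at hn₁
    linarith
  have hmid₁ : midpoint ℝ a₁ b₁ = M := by rw [ha₁, hb₁, hmid0]; module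
  have hu₁ : ‖b₁ - a₁‖⁻¹ • (b₁ - a₁) = u := by
    rw [hn₁, hb₁a₁, smul_smul, inv_mul_cancel₀ (by positivity), one_smul]
  set ρ₁ : ℝ := 4*κ*L with hρ₁def
  have hρ₁ : 0 < ρ₁ := by positivity
  obtain ⟨ψ₁, ψ₁i, hchart₁, hLI₁, hRI₁, hcont₁, hconti₁, hax₁, hrad₁, haxis₁⟩ :=
    exists_rigid_chart hd0 a₁ b₁ hab₁ ρ₁ hρ₁
  have hax₁' : ∀ y, axC (ψ₁i y) = ⟪y - M, u⟫ / (D/4) := by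
    intro y
    rw [hax₁ y, hmid₁, hu₁, hn₁, show (D/2/2 : ℝ) = D/4 by ring]
  have hrad₁' : ∀ y, ‖radC (ψ₁i y)‖ = ‖(y - M) - ⟪y - M, u⟫ • u‖ / ρ₁ := by
    intro y; rw [hrad₁ y, hmid₁, hu₁]
  set g : EuclideanSpace ℝ (Fin d) → EuclideanSpace ℝ (Fin d) :=
    fun x => ψ₁i (f (ψ₀ x)) with hg
  have hfl : ∀ p ∈ Ω₀, ∀ q ∈ Ω₀, ‖f p - f q‖ ≤ κ * ‖p - q‖ := by
    intro p hp q hq; rw [← dist_eq_norm, ← dist_eq_norm]; exact hlip p hp q hq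
  have hfcont : ContinuousOn f Ω₀ := by
    apply LipschitzOnWith.continuousOn (K := ⟨κ, hκ.le⟩)
    apply LipschitzOnWith.of_dist_le_mul
    intro p hp q hq
    exact hlip p hp q hq
  have hdistax : ∀ x ∈ closure (stdCyl d), ∀ τ : ℝ,
      ‖ψ₀ x - ψ₀ (τ • eAx d)‖ ≤ ρ₀ + (L/2) * |axC x - τ| := by
    intro x hx τ
    have hxb : ‖radC x‖ ≤ 1 := by rw [closure_stdCyl hd0] at hx; exact hx.1
    have hn2 : (0:ℝ) < ‖b₀ - a₀‖/2 := by rw [hnb]; linarith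
    have hcc : ⟪ψ₀ x - midpoint ℝ a₀ b₀, ‖b₀ - a₀‖⁻¹ • (b₀ - a₀)⟫
        = (‖b₀ - a₀‖/2) * axC x := by
      have h := hax₀ (ψ₀ x)
      rw [hLI₀ x, eq_div_iff hn2.ne'] at h
      linarith
    have hPP : ‖(ψ₀ x - midpoint ℝ a₀ b₀)
        - ((‖b₀ - a₀‖/2) * axC x) • (‖b₀ - a₀‖⁻¹ • (b₀ - a₀))‖ = ρ₀ * ‖radC x‖ := by
      have h := hrad₀ (ψ₀ x)
      rw [hLI₀ x, hcc, eq_div_iff hρ₀.ne'] at h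
      linarith
    have hdecomp : ψ₀ x - ψ₀ (τ • eAx d) =
        ((ψ₀ x - midpoint ℝ a₀ b₀) - ((‖b₀ - a₀‖/2) * axC x) • (‖b₀ - a₀‖⁻¹ • (b₀ - a₀)))
        + (((‖b₀ - a₀‖/2) * axC x - τ * (‖b₀ - a₀‖/2)) • (‖b₀ - a₀‖⁻¹ • (b₀ - a₀))) := by
      rw [haxis₀ τ]
      module
    rw [hdecomp]
    have hQ : ‖((‖b₀ - a₀‖/2) * axC x - τ * (‖b₀ - a₀‖/2)) • (‖b₀ - a₀‖⁻¹ • (b₀ - a₀))‖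
        = (‖b₀ - a₀‖/2) * |axC x - τ| := by
      rw [norm_smul, Real.norm_eq_abs, hu₀norm, mul_one,
        show ((‖b₀ - a₀‖/2) * axC x - τ * (‖b₀ - a₀‖/2) : ℝ)
          = (‖b₀ - a₀‖/2) * (axC x - τ) by ring,
        abs_mul, abs_of_pos hn2]
    calc ‖((ψ₀ x - midpoint ℝ a₀ b₀)
            - ((‖b₀ - a₀‖/2) * axC x) • (‖b₀ - a₀‖⁻¹ • (b₀ - a₀)))
          + (((‖b₀ - a₀‖/2) * axC x - τ * (‖b₀ - a₀‖/2)) • (‖b₀ - a₀‖⁻¹ • (b₀ - a₀)))‖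
        ≤ ‖(ψ₀ x - midpoint ℝ a₀ b₀)
            - ((‖b₀ - a₀‖/2) * axC x) • (‖b₀ - a₀‖⁻¹ • (b₀ - a₀))‖
          + ‖((‖b₀ - a₀‖/2) * axC x - τ * (‖b₀ - a₀‖/2)) • (‖b₀ - a₀‖⁻¹ • (b₀ - a₀))‖ :=
          norm_add_le _ _
      _ = ρ₀ * ‖radC x‖ + (‖b₀ - a₀‖/2) * |axC x - τ| := by rw [hPP, hQ]
      _ ≤ ρ₀ + (L/2) * |axC x - τ| := by nlinarith [abs_nonneg (axC x - τ), hnb]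
  have hfB : ∀ x ∈ closure (stdCyl d), ‖f (ψ₀ x) - B‖ ≤ κ * (ρ₀ + (L/2) * |axC x - 1|) := by
    intro x hx
    have h1 := hfl (ψ₀ x) (hψΩ x hx) b₀ hb₀Ω
    have h2 := hdistax x hx 1
    rw [hψb] at h2
    calc ‖f (ψ₀ x) - B‖ = ‖f (ψ₀ x) - f b₀‖ := by rw [hB]
      _ ≤ κ * ‖ψ₀ x - b₀‖ := h1
      _ ≤ κ * (ρ₀ + (L/2) * |axC x - 1|) := mul_le_mul_of_nonneg_left h2 hκ.le
  have hfA : ∀ x ∈ closure (stdCyl d), ‖f (ψ₀ x) - A‖ ≤ κ * (ρ₀ + (L/2) * |axC x + 1|) := by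
    intro x hx
    have h1 := hfl (ψ₀ x) (hψΩ x hx) a₀ ha₀Ω
    have h2 := hdistax x hx (-1)
    rw [hψa, sub_neg_eq_add] at h2
    calc ‖f (ψ₀ x) - A‖ = ‖f (ψ₀ x) - f a₀‖ := by rw [hA]
      _ ≤ κ * ‖ψ₀ x - a₀‖ := h1
      _ ≤ κ * (ρ₀ + (L/2) * |axC x + 1|) := mul_le_mul_of_nonneg_left h2 hκ.le
  have hBMv : B - M = (D/2) • u := by
    have h1 : B - M = (2⁻¹ : ℝ) • (B - A) := by rw [hM, hmid0]; module
    rw [h1, hBAu, smul_smul, show ((2:ℝ)⁻¹ * D) = D/2 by ring]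
  have hAMv : A - M = (-(D/2)) • u := by
    have h1 : A - M = (-(2⁻¹) : ℝ) • (B - A) := by rw [hM, hmid0]; module
    rw [h1, hBAu, smul_smul, show ((-(2:ℝ)⁻¹) * D) = -(D/2) by ring]
  have huu : ⟪u, u⟫ = (1:ℝ) := by rw [real_inner_self_eq_norm_sq, hun]; norm_num
  have hBMi : ⟪B - M, u⟫ = D/2 := by rw [hBMv, real_inner_smul_left, huu, mul_one]
  have hAMi : ⟪A - M, u⟫ = -(D/2) := by rw [hAMv, real_inner_smul_left, huu, mul_one]
  have hAMn : ‖A - M‖ = D/2 := by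
    rw [hAMv, norm_smul, Real.norm_eq_abs, abs_neg, abs_of_pos (by positivity), hun, mul_one]
  have hproj : ∀ w : EuclideanSpace ℝ (Fin d), ‖w - ⟪w, u⟫ • u‖ ≤ ‖w‖ := by
    intro w
    have h1 : ‖w - ⟪w, u⟫ • u‖^2 = ‖w‖^2 - ⟪w, u⟫^2 := by
      rw [norm_sub_sq_real, real_inner_smul_right, norm_smul, Real.norm_eq_abs, hun,
        mul_one, sq_abs]
      ring
    nlinarith [norm_nonneg (w - ⟪w, u⟫ • u), norm_nonneg w, sq_nonneg (⟪w, u⟫ : ℝ)]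
  have haxg : ∀ x, axC (g x) = ⟪f (ψ₀ x) - M, u⟫ / (D/4) := fun x => hax₁' (f (ψ₀ x))
  have hradgEq : ∀ x, ‖radC (g x)‖ = ‖(f (ψ₀ x) - M) - ⟪f (ψ₀ x) - M, u⟫ • u‖ / ρ₁ :=
    fun x => hrad₁' (f (ψ₀ x))
  have hradg : ∀ x ∈ closure (stdCyl d), ‖radC (g x)‖ < 1 := by
    intro x hx
    rw [hradgEq x, div_lt_one hρ₁]
    have h1 : ‖(f (ψ₀ x) - M) - ⟪f (ψ₀ x) - M, u⟫ • u‖ ≤ ‖f (ψ₀ x) - M‖ := hproj _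
    have h2 : ‖f (ψ₀ x) - M‖ ≤ ‖f (ψ₀ x) - A‖ + ‖A - M‖ := by
      calc ‖f (ψ₀ x) - M‖ = ‖(f (ψ₀ x) - A) + (A - M)‖ := by rw [sub_add_sub_cancel]
        _ ≤ _ := norm_add_le _ _
    have h3 := hfA x hx
    have hb2 : |axC x + 1| ≤ 2 := by
      rw [closure_stdCyl hd0] at hx
      have h4 := abs_le.mp hx.2
      rw [abs_le]
      constructor <;> linarith [h4.1, h4.2]
    have h4 : κ * (ρ₀ + (L/2) * |axC x + 1|) ≤ κ * (ρ₀ + L) := by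
      apply mul_le_mul_of_nonneg_left _ hκ.le
      nlinarith [abs_nonneg (axC x + 1)]
    have h5 : κ * (ρ₀ + L) + D/2 < ρ₁ := by
      rw [hρ₁def]
      nlinarith [mul_lt_mul_of_pos_left hρ₀L hκ]
    linarith [hAMn ▸ h2]
  have hkey : κ * (ρ₀ + (L/2) * δ) ≤ D/8 := by
    have e1 : κ * ((L/2) * δ) = L/(16*κ) := by
      rw [hδdef]; field_simp; ring
    have e2 : κ * ρ₀ < L/(16*κ) := by
      rw [lt_div_iff₀ (by positivity)]; nlinarith [h16]
    have e3 : L/(16*κ) + L/(16*κ) ≤ D/8 := by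
      rw [← add_div, div_le_div_iff₀ (by positivity) (by norm_num)]
      nlinarith [hDL]
    calc κ * (ρ₀ + (L/2) * δ) = κ * ρ₀ + κ * ((L/2) * δ) := by ring
      _ ≤ L/(16*κ) + L/(16*κ) := by rw [e1]; linarith
      _ ≤ D/8 := e3
  have hcapP : ∀ x ∈ closure (stdCyl d), 1 - δ ≤ axC x → 3/2 ≤ axC (g x) := by
    intro x hx h1
    have hxb : |axC x| ≤ 1 := by rw [closure_stdCyl hd0] at hx; exact hx.2
    have hax1 : |axC x - 1| ≤ δ := by
      rw [abs_le]
      have h2 := (abs_le.mp hxb).2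
      constructor <;> linarith
    have h2 := hfB x hx
    have h3 : ‖f (ψ₀ x) - B‖ ≤ κ * (ρ₀ + (L/2) * δ) := by
      apply le_trans h2
      apply mul_le_mul_of_nonneg_left _ hκ.le
      nlinarith
    have hsplit : ⟪f (ψ₀ x) - M, u⟫ = ⟪f (ψ₀ x) - B, u⟫ + ⟪B - M, u⟫ := by
      rw [show f (ψ₀ x) - M = (f (ψ₀ x) - B) + (B - M) from by abel, inner_add_left]
    have hcs : |⟪f (ψ₀ x) - B, u⟫| ≤ ‖f (ψ₀ x) - B‖ := by
      calc |⟪f (ψ₀ x) - B, u⟫| ≤ ‖f (ψ₀ x) - B‖ * ‖u‖ := abs_real_inner_le_norm _ _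
        _ = ‖f (ψ₀ x) - B‖ := by rw [hun, mul_one]
    have h4 : 3*D/8 ≤ ⟪f (ψ₀ x) - M, u⟫ := by
      rw [hsplit, hBMi]
      have h5 := (abs_le.mp hcs).1
      linarith
    rw [haxg x, le_div_iff₀ (by positivity : (0:ℝ) < D/4)]
    linarith
  have hcapN : ∀ x ∈ closure (stdCyl d), axC x ≤ -(1 - δ) → axC (g x) ≤ -(3/2) := by
    intro x hx h1
    have hxb : |axC x| ≤ 1 := by rw [closure_stdCyl hd0] at hx; exact hx.2
    have hax1 : |axC x + 1| ≤ δ := by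
      rw [abs_le]
      have h2 := (abs_le.mp hxb).1
      constructor <;> linarith
    have h2 := hfA x hx
    have h3 : ‖f (ψ₀ x) - A‖ ≤ κ * (ρ₀ + (L/2) * δ) := by
      apply le_trans h2
      apply mul_le_mul_of_nonneg_left _ hκ.le
      nlinarith
    have hsplit : ⟪f (ψ₀ x) - M, u⟫ = ⟪f (ψ₀ x) - A, u⟫ + ⟪A - M, u⟫ := by
      rw [show f (ψ₀ x) - M = (f (ψ₀ x) - A) + (A - M) from by abel, inner_add_left]
    have hcs : |⟪f (ψ₀ x) - A, u⟫| ≤ ‖f (ψ₀ x) - A‖ := by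
      calc |⟪f (ψ₀ x) - A, u⟫| ≤ ‖f (ψ₀ x) - A‖ * ‖u‖ := abs_real_inner_le_norm _ _
        _ = ‖f (ψ₀ x) - A‖ := by rw [hun, mul_one]
    have h4 : ⟪f (ψ₀ x) - M, u⟫ ≤ -(3*D/8) := by
      rw [hsplit, hAMi]
      have h5 := (abs_le.mp hcs).2
      linarith
    rw [haxg x, div_le_iff₀ (by positivity : (0:ℝ) < D/4)]
    linarith
  have hgc : ∀ x ∈ closure (stdCyl d), ContinuousAt g x := by
    intro x hx
    have h1 : ContinuousAt f (ψ₀ x) := hfcont.continuousAt (hΩ₀.mem_nhds (hψΩ x hx))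
    have h2 : ContinuousAt (fun x => f (ψ₀ x)) x :=
      ContinuousAt.comp (g := f) (f := ψ₀) h1 hcont₀.continuousAt
    exact ContinuousAt.comp (g := ψ₁i) (f := fun x => f (ψ₀ x)) hconti₁.continuousAt h2
  have hinjg : Set.InjOn g (closure (stdCyl d)) := by
    intro x hx y hy h
    have h1 : f (ψ₀ x) = f (ψ₀ y) := hRI₁.injective h
    have h2 : ψ₀ x = ψ₀ y := hbij.injOn (hψΩ x hx) (hψΩ y hy) h1
    exact hLI₀.injective h2
  have hMAS : MapsAcrossStd (ψ₁i ∘ f) ψ₀ := by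
    -- MapsAcrossStd (ψ₁i ∘ f) ψ₀
    have hEq : ∀ T : Set (EuclideanSpace ℝ (Fin d)), (ψ₁i ∘ f) '' (ψ₀ '' T) = g '' T := by
      intro T; rw [Set.image_image]; rfl
    unfold MapsAcrossStd
    simp only [hEq]
    refine ⟨?_, ?_, ?_, ?_, ?_⟩
    · -- (1) nonempty intersection, via IVT along the axis
      set aAx : ℝ → ℝ := fun t => axC (g (t • eAx d)) with haAx
      have habs : ∀ t : ℝ, -(1-δ) ≤ t → t ≤ 1-δ → |t| ≤ 1 := by
        intro t h1 h2; rw [abs_le]; constructor <;> linarith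
      have hcontA : ContinuousOn aAx (Icc (-(1-δ)) (1-δ)) := by
        intro t ht
        apply ContinuousAt.continuousWithinAt
        have hcl : t • eAx d ∈ closure (stdCyl d) := hteAx_cl t (habs t ht.1 ht.2)
        have hin : ContinuousAt (fun t : ℝ => t • eAx d) t :=
          (continuous_id.smul continuous_const).continuousAt
        have hmid2 : ContinuousAt (fun t : ℝ => g (t • eAx d)) t :=
          ContinuousAt.comp (g := g) (f := fun t : ℝ => t • eAx d) (hgc _ hcl) hin
        exact ContinuousAt.comp (g := axC) (f := fun t : ℝ => g (t • eAx d))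
          (continuous_axC hd0).continuousAt hmid2
      have hv2 : 3/2 ≤ aAx (1-δ) := by
        apply hcapP _ (hteAx_cl (1-δ) (by rw [abs_le]; constructor <;> linarith))
        rw [axC_smul hd0, axC_eAx hd0, mul_one]
      have hv1 : aAx (-(1-δ)) ≤ -(3/2) := by
        apply hcapN _ (hteAx_cl (-(1-δ)) (by rw [abs_le]; constructor <;> linarith))
        rw [axC_smul hd0, axC_eAx hd0, mul_one]
      have h0 : (0:ℝ) ∈ Icc (aAx (-(1-δ))) (aAx (1-δ)) := ⟨by linarith, by linarith⟩
      obtain ⟨t₀, ht₀I, ht₀⟩ := intermediate_value_Icc (by linarith : -(1-δ) ≤ 1-δ) hcontA h0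
      have ht₀mem : t₀ • eAx d ∈ stdCyl d := by
        constructor
        · rw [radC_smul hd0, radC_eAx hd0, smul_zero, norm_zero]; norm_num
        · rw [axC_smul hd0, axC_eAx hd0, mul_one, abs_lt]
          constructor <;> [linarith [ht₀I.1]; linarith [ht₀I.2]]
      refine ⟨g (t₀ • eAx d), mem_image_of_mem g ht₀mem, ?_, ?_⟩
      · exact hradg _ (subset_closure ht₀mem)
      · have h00 : axC (g (t₀ • eAx d)) = 0 := ht₀
        rw [h00]; norm_num
    · -- (2) avoids the lateral boundary
      rw [Set.eq_empty_iff_forall_notMem]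
      rintro z ⟨⟨x, hx, rfl⟩, hfr, hncaps⟩
      rw [(isOpen_stdCyl hd0).frontier_eq] at hfr
      obtain ⟨hclm, hnotin⟩ := hfr
      have hxcl : x ∈ closure (stdCyl d) := subset_closure hx
      have hr := hradg x hxcl
      have haxb : |axC (g x)| ≤ 1 := by rw [closure_stdCyl hd0] at hclm; exact hclm.2
      have hax1 : |axC (g x)| = 1 := by
        by_contra hne
        exact hnotin ⟨hr, lt_of_le_of_ne haxb hne⟩
      rcases (abs_eq (by norm_num : (0:ℝ) ≤ 1)).mp hax1 with h | h
      · exact hncaps (Or.inl ⟨hr, h⟩)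
      · exact hncaps (Or.inr ⟨hr, h⟩)
    · -- (3) top cap stays away
      rw [Set.eq_empty_iff_forall_notMem]
      rintro z ⟨h1, h2⟩
      have hsubs : g '' stdCap d 1 ⊆ {z | 3/2 ≤ axC z} := by
        rintro _ ⟨x, hx, rfl⟩
        exact hcapP x (stdCap_subset_closure hd0 (by norm_num) hx) (by rw [hx.2]; linarith)
      have hcl2 : closure (g '' stdCap d 1) ⊆ {z | 3/2 ≤ axC z} :=
        closure_minimal hsubs (isClosed_le continuous_const (continuous_axC hd0))
      have h3 := hcl2 h1
      rw [closure_stdCyl hd0] at h2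
      have h4 := (abs_le.mp h2.2).2
      simp only [mem_setOf_eq] at h3
      linarith
    · -- (4) bottom cap stays away
      rw [Set.eq_empty_iff_forall_notMem]
      rintro z ⟨h1, h2⟩
      have hsubs : g '' stdCap d (-1) ⊆ {z | axC z ≤ -(3/2)} := by
        rintro _ ⟨x, hx, rfl⟩
        apply hcapN x (stdCap_subset_closure hd0 (by norm_num) hx)
        rw [hx.2]; linarith
      have hcl2 : closure (g '' stdCap d (-1)) ⊆ {z | axC z ≤ -(3/2)} :=
        closure_minimal hsubs (isClosed_le (continuous_axC hd0) continuous_const)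
      have h3 := hcl2 h1
      rw [closure_stdCyl hd0] at h2
      have h4 := (abs_le.mp h2.2).1
      simp only [mem_setOf_eq] at h3
      linarith
    · -- (5) the two components
      intro σ hσc
      apply cond4 hd0 g σ hσc δ hδ0 hδ1 hgc hinjg hradg
      · intro x hx h1
        rcases hσc with rfl | rfl
        · rw [one_mul] at h1 ⊢
          linarith [hcapP x hx h1]
        · have h2 : axC x ≤ -(1-δ) := by nlinarith
          have h3 := hcapN x hx h2
          nlinarith
      · intro x hx h1
        rcases hσc with rfl | rfl
        · rw [one_mul] at h1 ⊢
          linarith [hcapN x hx h1]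
        · have h2 : 1 - δ ≤ axC x := by nlinarith
          have h3 := hcapP x hx h2
          nlinarith
  refine ⟨a₁, b₁, ρ₁, hab₁, hρ₁, ⟨ψ₀, hchart₀, ψ₁, ψ₁i, hchart₁, hLI₁, hRI₁, hMAS⟩, ?_⟩
  have hd₁ : dist a₁ b₁ = D/2 := by rw [dist_eq_norm, norm_sub_rev, hn₁]
  rw [hd₁, hρ₁def]
  nlinarith [mul_le_mul_of_nonneg_left hDL (by positivity : (0:ℝ) ≤ 4*κ)]
end

section
/- Let D and D* be bounded open sets in ℝ² and let φ : D → D* be a C¹ diffeomorphism (a bijection such that both φ and φ⁻¹ are C¹). Let 1 < p < ∞ and suppose the p-energy E_p(φ) = ∫_D (|∇u|^p + |∇v|^p) dμ is finite, where φ = (u,v). Then, writing φ⁻¹ = (U,V), one has ∫_{D*} (|U_x| + |U_y| + |V_x| + |V_y|) dμ ≤ 4 · (μ(D))^{1−1/p} · (E_p(φ))^{1/p}. In particular the 1-energy E₁(φ⁻¹) = ∫_{D*} (|∇U| + |∇V|) dμ is finite and satisfies E₁(φ⁻¹) ≤ 4 · (μ(D))^{1−1/p} · (E_p(φ))^{1/p}.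 -/
open scoped ENNReal
open MeasureTheory

/-- The partial derivative `∂w/∂x_i` of a real function on `ℝ²`. -/
noncomputable def pderiv2 (i : Fin 2) (w : EuclideanSpace ℝ (Fin 2) → ℝ)
    (x : EuclideanSpace ℝ (Fin 2)) : ℝ :=
  fderiv ℝ w x (EuclideanSpace.single i 1)

/-- The Euclidean norm of the gradient of a real function on `ℝ²`. -/
noncomputable def gradNorm (w : EuclideanSpace ℝ (Fin 2) → ℝ)
    (x : EuclideanSpace ℝ (Fin 2)) : ℝ :=
  Real.sqrt (pderiv2 0 w x ^ 2 + pderiv2 1 w x ^ 2)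

local notation "E2" => EuclideanSpace ℝ (Fin 2)

/-- entry (i,j) of a continuous linear map on ℝ². -/
noncomputable def ent (B : E2 →L[ℝ] E2) (i j : Fin 2) : ℝ := B (EuclideanSpace.single j 1) i

lemma decomp (x : E2) : x = x 0 • EuclideanSpace.single 0 1 + x 1 • EuclideanSpace.single 1 1 := by
  ext i
  fin_cases i <;> simp [EuclideanSpace.single_apply]

lemma apply_eq (B : E2 →L[ℝ] E2) (x : E2) (i : Fin 2) :
    B x i = x 0 * ent B i 0 + x 1 * ent B i 1 := by
  conv_lhs => rw [decomp x]
  simp [ent]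

lemma det_eq (B : E2 →L[ℝ] E2) :
    ContinuousLinearMap.det B = ent B 0 0 * ent B 1 1 - ent B 0 1 * ent B 1 0 := by
  set b := (EuclideanSpace.basisFun (Fin 2) ℝ).toBasis
  have : ContinuousLinearMap.det B = LinearMap.det (B : E2 →ₗ[ℝ] E2) := rfl
  rw [this, ← LinearMap.det_toMatrix b, Matrix.det_fin_two]
  have h : ∀ i j : Fin 2, LinearMap.toMatrix b b (B : E2 →ₗ[ℝ] E2) i j = ent B i j := by
    intro i j
    rw [LinearMap.toMatrix_apply]
    simp [b, ent, OrthonormalBasis.coe_toBasis_repr_apply, EuclideanSpace.basisFun_repr,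
      EuclideanSpace.basisFun_apply]
  rw [h, h, h, h]

lemma inv_entries (B C : E2 →L[ℝ] E2)
    (hCB : ∀ x : E2, C (B x) = x) (hBC : ∀ x : E2, B (C x) = x) :
    |ContinuousLinearMap.det B| * (|ent C 0 0| + |ent C 0 1| + |ent C 1 0| + |ent C 1 1|)
      = |ent B 0 0| + |ent B 0 1| + |ent B 1 0| + |ent B 1 1| := by
  have hB : ∀ i j : Fin 2, B (EuclideanSpace.single j 1) i = ent B i j := fun _ _ => rfl
  set a00 := ent B 0 0; set a01 := ent B 0 1; set a10 := ent B 1 0; set a11 := ent B 1 1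
  set c00 := ent C 0 0; set c01 := ent C 0 1; set c10 := ent C 1 0; set c11 := ent C 1 1
  set d := ContinuousLinearMap.det B with hd
  have hdet : d = a00 * a11 - a01 * a10 := det_eq B
  have key : ∀ (j i : Fin 2), ent B 0 j * ent C i 0 + ent B 1 j * ent C i 1
      = (EuclideanSpace.single j 1 : E2) i := by
    intro j i
    have h := congrArg (fun v : E2 => v i) (hCB (EuclideanSpace.single j 1))
    simp only at h
    rw [apply_eq C] at h
    rw [hB 0 j, hB 1 j] at h
    exact h
  have e1 := key 0 0; have e2 := key 1 0; have e3 := key 0 1; have e4 := key 1 1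
  simp [EuclideanSpace.single_apply] at e1 e2 e3 e4
  have hc00 : d * c00 = a11 := by linear_combination a11 * e1 - a10 * e2 + c00 * hdet
  have hc01 : d * c01 = -a01 := by linear_combination -a01 * e1 + a00 * e2 + c01 * hdet
  have hc10 : d * c10 = -a10 := by linear_combination a11 * e3 - a10 * e4 + c10 * hdet
  have hc11 : d * c11 = a00 := by linear_combination -a01 * e3 + a00 * e4 + c11 * hdet
  calc |d| * (|c00| + |c01| + |c10| + |c11|)
      = |d * c00| + |d * c01| + |d * c10| + |d * c11| := by
        simp only [abs_mul]; ring
    _ = |a00| + |a01| + |a10| + |a11| := by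
        rw [hc00, hc01, hc10, hc11, abs_neg, abs_neg]; ring

lemma pderiv2_eq (w : E2 → E2) (i j : Fin 2) (z : E2) (C : E2 →L[ℝ] E2)
    (h : HasFDerivAt w C z) :
    pderiv2 j (fun y => w y i) z = ent C i j := by
  have h2 : HasFDerivAt (fun y => w y i) ((EuclideanSpace.proj i (𝕜 := ℝ)).comp C) z :=
    (EuclideanSpace.proj i (𝕜 := ℝ)).hasFDerivAt.comp z h
  rw [pderiv2, h2.fderiv]
  rfl

lemma meas_pderiv (j : Fin 2) (w : E2 → ℝ) : Measurable (pderiv2 j w) := by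
  have h1 : Measurable (fderiv ℝ w) := measurable_fderiv ℝ w
  exact ((ContinuousLinearMap.apply ℝ ℝ
    (EuclideanSpace.single j 1 : E2)).continuous.measurable).comp h1

lemma abs_pderiv_le (j : Fin 2) (w : E2 → ℝ) (x : E2) : |pderiv2 j w x| ≤ gradNorm w x := by
  rw [gradNorm, ← Real.sqrt_sq_eq_abs]
  apply Real.sqrt_le_sqrt
  match j with
  | 0 => nlinarith [sq_nonneg (pderiv2 1 w x)]
  | 1 => nlinarith [sq_nonneg (pderiv2 0 w x)]

/-- **Energy of the inverse**: let `φ : D → D*` be a `C¹` diffeomorphism between bounded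
planar domains, `φ = (u,v)`, `φ⁻¹ = (U,V)`, and let `1 < p < ∞`.  If the `p`-energy
`E_p(φ) = ∫_D (|∇u|^p + |∇v|^p)` is finite, then
`E₁(φ⁻¹) = ∫_{D*} (|U_x| + |U_y| + |V_x| + |V_y|) ≤ 4 · (Area D)^{1-1/p} · E_p(φ)^{1/p}`;
in particular `E₁(φ⁻¹)` is finite. -/
theorem inverse_energy (p : ℝ) (hp : 1 < p)
    (D Dstar : Set (EuclideanSpace ℝ (Fin 2)))
    (hDo : IsOpen D) (hDso : IsOpen Dstar)
    (hDb : Bornology.IsBounded D) (hDsb : Bornology.IsBounded Dstar)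
    (φ ψ : EuclideanSpace ℝ (Fin 2) → EuclideanSpace ℝ (Fin 2))
    (hbij : Set.BijOn φ D Dstar) (hinv : Set.InvOn ψ φ D Dstar)
    (hφ : ContDiffOn ℝ 1 φ D) (hψ : ContDiffOn ℝ 1 ψ Dstar)
    (hE : (∫⁻ x in D, ENNReal.ofReal
        (gradNorm (fun y => φ y 0) x ^ p + gradNorm (fun y => φ y 1) x ^ p)) ≠ ⊤) :
    (∫⁻ x in Dstar, ENNReal.ofReal
        (|pderiv2 0 (fun y => ψ y 0) x| + |pderiv2 1 (fun y => ψ y 0) x| +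
         |pderiv2 0 (fun y => ψ y 1) x| + |pderiv2 1 (fun y => ψ y 1) x|)) ≤
      ENNReal.ofReal (4 * (volume D).toReal ^ (1 - 1 / p) *
        (∫⁻ x in D, ENNReal.ofReal
          (gradNorm (fun y => φ y 0) x ^ p + gradNorm (fun y => φ y 1) x ^ p)).toReal
            ^ (1 / p)) := by
  have hDm : MeasurableSet D := hDo.measurableSet
  set I := ∫⁻ x in D, ENNReal.ofReal
      (gradNorm (fun y => φ y 0) x ^ p + gradNorm (fun y => φ y 1) x ^ p) with hIdef
  set q := Real.conjExponent p with hqdef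
  have hpq : p.HolderConjugate q := Real.HolderConjugate.conjExponent hp
  -- differentiability
  have hφd : ∀ x ∈ D, HasFDerivAt φ (fderiv ℝ φ x) x := fun x hx =>
    ((hφ.contDiffAt (hDo.mem_nhds hx)).differentiableAt one_ne_zero).hasFDerivAt
  have hψd : ∀ y ∈ Dstar, HasFDerivAt ψ (fderiv ℝ ψ y) y := fun y hy =>
    ((hψ.contDiffAt (hDso.mem_nhds hy)).differentiableAt one_ne_zero).hasFDerivAt
  set g : E2 → ℝ≥0∞ := fun z => ENNReal.ofReal
      (|pderiv2 0 (fun y => ψ y 0) z| + |pderiv2 1 (fun y => ψ y 0) z| +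
       |pderiv2 0 (fun y => ψ y 1) z| + |pderiv2 1 (fun y => ψ y 1) z|) with hgdef
  have himg : Dstar = φ '' D := hbij.image_eq.symm
  have cov : (∫⁻ y in Dstar, g y) = ∫⁻ x in D, ENNReal.ofReal |(fderiv ℝ φ x).det| * g (φ x) := by
    rw [himg]
    exact lintegral_image_eq_lintegral_abs_det_fderiv_mul volume hDm
      (fun x hx => (hφd x hx).hasFDerivWithinAt) hbij.injOn g
  have point : ∀ x ∈ D, ENNReal.ofReal |(fderiv ℝ φ x).det| * g (φ x)
      = ENNReal.ofReal (|pderiv2 0 (fun y => φ y 0) x| + |pderiv2 1 (fun y => φ y 0) x| +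
          |pderiv2 0 (fun y => φ y 1) x| + |pderiv2 1 (fun y => φ y 1) x|) := by
    intro x hx
    have hxs : φ x ∈ Dstar := hbij.mapsTo hx
    set B := fderiv ℝ φ x with hB
    set C := fderiv ℝ ψ (φ x) with hC
    have hBx : HasFDerivAt φ B x := hφd x hx
    have hCy : HasFDerivAt ψ C (φ x) := hψd _ hxs
    have hCB : ∀ v : E2, C (B v) = v := by
      have h1 : HasFDerivAt (ψ ∘ φ) (C.comp B) x := hCy.comp x hBx
      have h2 : (ψ ∘ φ) =ᶠ[nhds x] id :=
        Filter.eventuallyEq_of_mem (hDo.mem_nhds hx) (fun z hz => hinv.1 hz)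
      have h3 : HasFDerivAt (id : E2 → E2) (C.comp B) x := h1.congr_of_eventuallyEq h2.symm
      have h4 : C.comp B = ContinuousLinearMap.id ℝ E2 := h3.unique (hasFDerivAt_id x)
      intro v
      have := congrArg (fun (L : E2 →L[ℝ] E2) => L v) h4
      simpa using this
    have hBC : ∀ v : E2, B (C v) = v := by
      have hx' : ψ (φ x) = x := hinv.1 hx
      have hBx' : HasFDerivAt φ B (ψ (φ x)) := by rw [hx']; exact hBx
      have h1 : HasFDerivAt (φ ∘ ψ) (B.comp C) (φ x) := hBx'.comp (φ x) hCy
      have h2 : (φ ∘ ψ) =ᶠ[nhds (φ x)] id :=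
        Filter.eventuallyEq_of_mem (hDso.mem_nhds hxs) (fun z hz => hinv.2 hz)
      have h3 : HasFDerivAt (id : E2 → E2) (B.comp C) (φ x) := h1.congr_of_eventuallyEq h2.symm
      have h4 : B.comp C = ContinuousLinearMap.id ℝ E2 := h3.unique (hasFDerivAt_id (φ x))
      intro v
      have := congrArg (fun (L : E2 →L[ℝ] E2) => L v) h4
      simpa using this
    have hpsi : ∀ i j : Fin 2, pderiv2 j (fun y => ψ y i) (φ x) = ent C i j :=
      fun i j => pderiv2_eq ψ i j (φ x) C hCy
    have hphi : ∀ i j : Fin 2, pderiv2 j (fun y => φ y i) x = ent B i j :=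
      fun i j => pderiv2_eq φ i j x B hBx
    rw [hgdef]
    simp only [hpsi 0 0, hpsi 0 1, hpsi 1 0, hpsi 1 1, hphi 0 0, hphi 0 1, hphi 1 0, hphi 1 1]
    rw [← ENNReal.ofReal_mul (abs_nonneg _)]
    congr 1
    exact inv_entries B C hCB hBC
  rw [show (∫⁻ x in Dstar, ENNReal.ofReal
        (|pderiv2 0 (fun y => ψ y 0) x| + |pderiv2 1 (fun y => ψ y 0) x| +
         |pderiv2 0 (fun y => ψ y 1) x| + |pderiv2 1 (fun y => ψ y 1) x|)) = ∫⁻ y in Dstar, g y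
    from rfl, cov, setLIntegral_congr_fun hDm point]
  -- now bound ∫⁻ x in D, ofReal (sum of |∂φ|) by Hölder
  have hAne : volume D ≠ ⊤ := by
    have hc : IsCompact (closure D) :=
      Metric.isCompact_of_isClosed_isBounded isClosed_closure hDb.closure
    exact ne_top_of_le_ne_top hc.measure_lt_top.ne (measure_mono subset_closure)
  set A := volume D with hAdef
  have hq0 : (0:ℝ) ≤ 1 / q := hpq.symm.one_div_nonneg
  have hp0 : (0:ℝ) ≤ 1 / p := hpq.one_div_nonneg
  set X := I ^ (1/p) * A ^ (1/q) with hXdef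
  have hterm : ∀ i j : Fin 2,
      (∫⁻ x in D, ENNReal.ofReal |pderiv2 j (fun y => φ y i) x|) ≤ X := by
    intro i j
    set f := fun x => ENNReal.ofReal |pderiv2 j (fun y => φ y i) x| with hfdef
    have hfm : AEMeasurable f (volume.restrict D) :=
      (((meas_pderiv j _).abs).ennreal_ofReal).aemeasurable
    have h := ENNReal.lintegral_mul_le_Lp_mul_Lq (volume.restrict D) hpq hfm
      (aemeasurable_const (b := (1:ℝ≥0∞)))
    simp only [Pi.mul_apply, mul_one, ENNReal.one_rpow, setLIntegral_one] at h
    have hfp : (∫⁻ x in D, f x ^ p) ≤ I := by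
      apply lintegral_mono
      intro x
      rw [hfdef]
      simp only
      rw [ENNReal.ofReal_rpow_of_nonneg (abs_nonneg _) hpq.nonneg]
      apply ENNReal.ofReal_le_ofReal
      have h1 : |pderiv2 j (fun y => φ y i) x| ^ p ≤ gradNorm (fun y => φ y i) x ^ p :=
        Real.rpow_le_rpow (abs_nonneg _) (abs_pderiv_le j _ x) hpq.nonneg
      have h2 : (0:ℝ) ≤ gradNorm (fun y => φ y 0) x ^ p :=
        Real.rpow_nonneg (Real.sqrt_nonneg _) p
      have h3 : (0:ℝ) ≤ gradNorm (fun y => φ y 1) x ^ p :=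
        Real.rpow_nonneg (Real.sqrt_nonneg _) p
      match i with
      | 0 => linarith
      | 1 => linarith
    calc (∫⁻ x in D, f x) ≤ (∫⁻ x in D, f x ^ p) ^ (1/p) * A ^ (1/q) := h
      _ ≤ X := by
          rw [hXdef]
          exact mul_le_mul' (ENNReal.rpow_le_rpow hfp hp0) le_rfl
  have hm : ∀ i j : Fin 2,
      Measurable fun x => ENNReal.ofReal |pderiv2 j (fun y => φ y i) x| :=
    fun i j => ((meas_pderiv j _).abs).ennreal_ofReal
  have hsplit : (∫⁻ x in D, ENNReal.ofReal
      (|pderiv2 0 (fun y => φ y 0) x| + |pderiv2 1 (fun y => φ y 0) x| +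
        |pderiv2 0 (fun y => φ y 1) x| + |pderiv2 1 (fun y => φ y 1) x|))
      ≤ X + X + X + X := by
    have heq : ∀ x : E2, ENNReal.ofReal
        (|pderiv2 0 (fun y => φ y 0) x| + |pderiv2 1 (fun y => φ y 0) x| +
          |pderiv2 0 (fun y => φ y 1) x| + |pderiv2 1 (fun y => φ y 1) x|)
        = ENNReal.ofReal |pderiv2 0 (fun y => φ y 0) x|
          + ENNReal.ofReal |pderiv2 1 (fun y => φ y 0) x|
          + ENNReal.ofReal |pderiv2 0 (fun y => φ y 1) x|
          + ENNReal.ofReal |pderiv2 1 (fun y => φ y 1) x| := by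
      intro x
      rw [ENNReal.ofReal_add (by positivity) (abs_nonneg _),
        ENNReal.ofReal_add (by positivity) (abs_nonneg _),
        ENNReal.ofReal_add (abs_nonneg _) (abs_nonneg _)]
    rw [lintegral_congr heq, lintegral_add_right _ (hm 1 1), lintegral_add_right _ (hm 1 0),
      lintegral_add_right _ (hm 0 1)]
    exact add_le_add (add_le_add (add_le_add (hterm 0 0) (hterm 0 1)) (hterm 1 0)) (hterm 1 1)
  refine hsplit.trans (le_of_eq ?_)
  have h1q : 1 - 1 / p = 1 / q := by
    have := hpq.inv_add_inv_eq_one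
    rw [one_div, one_div]
    linarith
  rw [h1q, ENNReal.ofReal_mul (by positivity), ENNReal.ofReal_mul (by norm_num),
    ENNReal.toReal_rpow, ENNReal.toReal_rpow,
    ENNReal.ofReal_toReal (ENNReal.rpow_ne_top_of_nonneg hq0 hAne),
    ENNReal.ofReal_toReal (ENNReal.rpow_ne_top_of_nonneg hp0 hE),
    ENNReal.ofReal_ofNat, hXdef]
  ring
end
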